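/- In the Shirshov factorization w = c₁c₂⋯cₙ of a word w into a nondecreasing product of Lyndon words, every Lyndon subword (factor) v of w is a factor of one of the words cᵢ. -/

import Mathlib

/-- The lexicographic ordering on words with the convention that a proper prefix is
greater than the word extending it (`u ≻ uv` for `v ≠ 1`): `gtLex u v` means `u ≻ v`. -/
def gtLex {X : Type*} [LinearOrder X] : List X → List X → Prop
  | [], [] => False
  | [], _ :: _ => True
  | _ :: _, [] => False
  | a :: u, b :: v => b < a ∨ (a = b ∧ gtLex u v)

/-- `w` is an associative Lyndon–Shirshov word: `w` is nonempty and `w ≻ v ++ u` for every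
factorization `w = u ++ v` into nonempty words. -/
def IsALSW {X : Type*} [LinearOrder X] (w : List X) : Prop :=
  w ≠ [] ∧ ∀ u v : List X, u ≠ [] → v ≠ [] → w = u ++ v → gtLex w (v ++ u)

namespace LyndonShirshovAux

variable {X : Type*} [LinearOrder X]

/-- `u ≻ v` witnessed by a letter difference after a common prefix. -/
def GtL (u v : List X) : Prop :=
  ∃ (q : List X) (a b : X) (u' v' : List X),
    b < a ∧ u = q ++ a :: u' ∧ v = q ++ b :: v'

lemma gtLex_trans : ∀ (u v w : List X), gtLex u v → gtLex v w → gtLex u w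
  | [], [], _, h, _ => h.elim
  | [], _ :: _, [], _, h => h.elim
  | [], _ :: _, _ :: _, _, _ => trivial
  | _ :: _, [], _, h, _ => h.elim
  | _ :: _, _ :: _, [], _, h => h.elim
  | a :: u, b :: v, c :: w, h1, h2 => by
      rcases h1 with h1 | ⟨rfl, h1⟩
      · rcases h2 with h2 | ⟨rfl, h2⟩
        · exact Or.inl (h2.trans h1)
        · exact Or.inl h1
      · rcases h2 with h2 | ⟨rfl, h2⟩
        · exact Or.inl h2
        · exact Or.inr ⟨rfl, gtLex_trans u v w h1 h2⟩

lemma gtLex_irrefl : ∀ (u : List X), ¬ gtLex u u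
  | [], h => h
  | a :: u, h => by
      rcases h with h | ⟨-, h⟩
      · exact absurd h (lt_irrefl a)
      · exact gtLex_irrefl u h

lemma gtLex_append : ∀ (u x : List X), x ≠ [] → gtLex u (u ++ x)
  | [], [], hx => absurd rfl hx
  | [], _ :: _, _ => trivial
  | _ :: u, x, hx => Or.inr ⟨rfl, gtLex_append u x hx⟩

lemma gtLex_of_gtL {u v : List X} (h : GtL u v) : gtLex u v := by
  obtain ⟨q, a, b, u', v', hba, rfl, rfl⟩ := h
  induction q with
  | nil => exact Or.inl hba
  | cons c q ih => exact Or.inr ⟨rfl, ih⟩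

lemma gtL_of_length_eq : ∀ (u v : List X), gtLex u v → u.length = v.length → GtL u v
  | [], [], h, _ => h.elim
  | [], _ :: _, _, hl => by simp at hl
  | _ :: _, [], h, _ => h.elim
  | a :: u, b :: v, h, hl => by
      rcases h with h | ⟨rfl, h⟩
      · exact ⟨[], a, b, u, v, h, rfl, rfl⟩
      · obtain ⟨q, a', b', u', v', hba, rfl, rfl⟩ :=
          gtL_of_length_eq u v h (by simpa using hl)
        exact ⟨a :: q, a', b', u', v', hba, rfl, rfl⟩

/-- If `l ++ r = q ++ b :: w` with `|q| < |l|`, then `l = q ++ b :: m` for some `m`. -/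
lemma eq_mid {l r q w : List X} {b : X} (h : l ++ r = q ++ b :: w)
    (hq : q.length < l.length) : ∃ m, l = q ++ b :: m := by
  have ht : l.take q.length = q := by
    have h2 := congrArg (List.take q.length) h
    rwa [List.take_append_of_le_length hq.le, List.take_left] at h2
  have hd : l.drop q.length ≠ [] := by
    intro hnil
    rw [List.drop_eq_nil_iff] at hnil
    omega
  obtain ⟨x, m, hxm⟩ := List.exists_cons_of_ne_nil hd
  have hl : l = q ++ x :: m := by
    conv_lhs => rw [← List.take_append_drop q.length l, ht, hxm]
  refine ⟨m, ?_⟩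
  rw [hl] at h
  simp only [List.append_assoc, List.cons_append] at h
  have h3 := List.append_cancel_left h
  have hx : x = b := (List.cons.inj h3).1
  rw [hl, hx]

/-- If `l ++ r = q ++ w` with `|l| ≤ |q|`, then `q = l ++ (q.drop |l|)`. -/
lemma eq_pref {l r q w : List X} (h : l ++ r = q ++ w) (hq : l.length ≤ q.length) :
    q = l ++ q.drop l.length := by
  have ht : q.take l.length = l := by
    have h2 := congrArg (List.take l.length) h
    rw [List.take_left, List.take_append_of_le_length hq] at h2
    exact h2.symm
  conv_lhs => rw [← List.take_append_drop l.length q, ht]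

lemma gtL_cancel {s x y : List X} (h : GtL (s ++ x) (s ++ y)) : GtL x y := by
  obtain ⟨q, a, b, u', v', hba, h1, h2⟩ := h
  have hqs : s.length ≤ q.length := by
    by_contra hlt
    push_neg at hlt
    obtain ⟨m1, hm1⟩ := eq_mid h1 hlt
    obtain ⟨m2, hm2⟩ := eq_mid h2 hlt
    rw [hm1] at hm2
    have h3 := List.append_cancel_left hm2
    exact absurd (List.cons.inj h3).1 (ne_of_gt hba)
  have hq : q = s ++ q.drop s.length := eq_pref h1 hqs
  refine ⟨q.drop s.length, a, b, u', v', hba, ?_, ?_⟩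
  · have h1' := h1
    rw [hq, List.append_assoc] at h1'
    exact List.append_cancel_left h1'
  · have h2' := h2
    rw [hq, List.append_assoc] at h2'
    exact List.append_cancel_left h2'

/-- An ALSW is greater, at a letter, than each of its proper nonempty suffixes. -/
lemma alsw_gtL_suffix {c : List X} (hc : IsALSW c) {u s : List X}
    (hu : u ≠ []) (hs : s ≠ []) (h : c = u ++ s) : GtL c s := by
  have h1 : gtLex c (s ++ u) := hc.2 u s hu hs h
  have hlen : c.length = (s ++ u).length := by
    rw [h]; simp [Nat.add_comm]
  obtain ⟨q, a, b, u₁, v₁, hba, hc1, hsu⟩ := gtL_of_length_eq _ _ h1 hlen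
  by_cases hq : q.length < s.length
  · obtain ⟨m, hm⟩ := eq_mid hsu hq
    exact ⟨q, a, b, u₁, m, hba, hc1, hm⟩
  · push_neg at hq
    have hq2 : q = s ++ q.drop s.length := eq_pref hsu hq
    have hcm : c = s ++ (q.drop s.length ++ a :: u₁) := by
      rw [hc1]
      conv_lhs => rw [hq2]
      rw [List.append_assoc]
    have hm0 : q.drop s.length ++ a :: u₁ ≠ [] := by simp
    have h2 : gtLex c ((q.drop s.length ++ a :: u₁) ++ s) := hc.2 s _ hs hm0 hcm
    have hlen2 : c.length = ((q.drop s.length ++ a :: u₁) ++ s).length := by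
      rw [hcm]
      simp only [List.length_append, List.length_cons]
      omega
    have G2 : GtL c ((q.drop s.length ++ a :: u₁) ++ s) := gtL_of_length_eq _ _ h2 hlen2
    have Gsm : GtL (s ++ (q.drop s.length ++ a :: u₁)) (s ++ u) := by
      rw [← hcm]; exact ⟨q, a, b, u₁, v₁, hba, hc1, hsu⟩
    obtain ⟨p, a₂, b₂, x, y, hba₂, hmp, hup⟩ := gtL_cancel Gsm
    have G3 : GtL ((q.drop s.length ++ a :: u₁) ++ s) c :=
      ⟨p, a₂, b₂, x ++ s, y ++ s, hba₂,
        by rw [hmp]; simp [List.append_assoc],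
        by rw [h, hup]; simp [List.append_assoc]⟩
    exact (gtLex_irrefl c (gtLex_trans _ _ _ (gtLex_of_gtL G2) (gtLex_of_gtL G3))).elim

lemma alsw_suffix {V v : List X} (hV : IsALSW V) (hsuf : v <:+ V) (hv : v ≠ []) :
    v = V ∨ GtL V v := by
  obtain ⟨u, rfl⟩ := hsuf
  rcases eq_or_ne u [] with rfl | hu
  · left; rfl
  · right; exact alsw_gtL_suffix hV hu hv rfl

lemma contra_helper {V v d : List X} (hV : IsALSW V) (hsuf : v <:+ V) (hvne : v ≠ [])
    (hd : d = V ∨ gtLex d V) (hvd : gtLex v d) : False := by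
  have h1 : gtLex v V := by
    rcases hd with rfl | h
    · exact hvd
    · exact gtLex_trans _ _ _ hvd h
  rcases alsw_suffix hV hsuf hvne with rfl | h2
  · exact gtLex_irrefl _ h1
  · exact gtLex_irrefl _ (gtLex_trans _ _ _ h1 (gtLex_of_gtL h2))

/-- Key lemma: a nonempty suffix `v` of an ALSW `V` cannot be `≻` (at a letter) a word `t`
that is a prefix of a concatenation of words each of which is `⪰ V`. -/
lemma no_cross {V : List X} (hV : IsALSW V) :
    ∀ (ds : List (List X)) (t v : List X), v <:+ V → GtL v t →
      t <+: ds.flatten → (∀ d ∈ ds, d = V ∨ gtLex d V) → False := by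
  intro ds
  induction ds with
  | nil =>
    intro t v _ hG ht _
    obtain ⟨q, a, b, u', v', -, -, hv⟩ := hG
    have h0 : t = [] := by simpa using ht
    simp [h0] at hv
  | cons d ds ih =>
    intro t v hsuf hG ht hge
    have hvne : v ≠ [] := by
      obtain ⟨q, a, b, u', v', -, hv, -⟩ := hG
      simp [hv]
    obtain ⟨r, hr⟩ := ht
    rw [List.flatten_cons] at hr
    by_cases hlen : t.length ≤ d.length
    · have htd : d = t ++ d.drop t.length := eq_pref hr hlen
      have hvd : gtLex v d := by
        rcases eq_or_ne (d.drop t.length) [] with hnil | hne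
        · rw [htd, hnil, List.append_nil]; exact gtLex_of_gtL hG
        · exact gtLex_trans _ _ _ (gtLex_of_gtL hG) (htd ▸ gtLex_append t _ hne)
      exact contra_helper hV hsuf hvne (hge d (List.mem_cons_self)) hvd
    · push_neg at hlen
      have htd : t = d ++ t.drop d.length := eq_pref hr.symm hlen.le
      have ht' : t.drop d.length <+: ds.flatten := by
        refine ⟨r, ?_⟩
        have h4 := hr
        rw [htd, List.append_assoc] at h4
        exact List.append_cancel_left h4
      obtain ⟨q, a, b, u₁, v₁, hba, hv1, ht1⟩ := hG
      have ht2 : d ++ t.drop d.length = q ++ b :: v₁ := by rw [← htd]; exact ht1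
      by_cases hqd : q.length < d.length
      · obtain ⟨m, hm⟩ := eq_mid ht2 hqd
        have hvd : gtLex v d := gtLex_of_gtL ⟨q, a, b, u₁, m, hba, hv1, hm⟩
        exact contra_helper hV hsuf hvne (hge d (List.mem_cons_self)) hvd
      · push_neg at hqd
        have hq : q = d ++ q.drop d.length := eq_pref ht2 hqd
        have hv2 : v = d ++ (q.drop d.length ++ a :: u₁) := by
          rw [hv1]
          conv_lhs => rw [hq]
          rw [List.append_assoc]
        have ht3 : t.drop d.length = q.drop d.length ++ b :: v₁ := by
          have h5 := ht2
          rw [hq, List.append_assoc] at h5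
          exact List.append_cancel_left h5
        have hsuf2 : (q.drop d.length ++ a :: u₁) <:+ V :=
          List.IsSuffix.trans ⟨d, hv2.symm⟩ hsuf
        exact ih (t.drop d.length) (q.drop d.length ++ a :: u₁) hsuf2
          ⟨q.drop d.length, a, b, u₁, v₁, hba, rfl, ht3⟩ ht'
          (fun d' hd' => hge d' (List.mem_cons_of_mem d hd'))

lemma chain_head {c : List X} {cs : List (List X)}
    (h : (c :: cs).Chain' (fun c d => c = d ∨ gtLex d c)) :
    ∀ d ∈ cs, d = c ∨ gtLex d c := by
  induction cs generalizing c with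
  | nil => intro d hd; simp at hd
  | cons d' cs ih =>
    intro d hd
    have h1 : c = d' ∨ gtLex d' c := (List.isChain_cons_cons.mp h).1
    have h2 := (List.isChain_cons_cons.mp h).2
    rcases List.mem_cons.mp hd with rfl | hd
    · rcases h1 with rfl | h1
      · exact Or.inl rfl
      · exact Or.inr h1
    · rcases ih h2 d hd with rfl | h3
      · rcases h1 with rfl | h1
        · exact Or.inl rfl
        · exact Or.inr h1
      · rcases h1 with rfl | h1
        · exact Or.inr h3
        · exact Or.inr (gtLex_trans _ _ _ h3 h1)

end LyndonShirshovAux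

open LyndonShirshovAux in
/-- In the Shirshov factorization `w = c₁c₂⋯cₙ` into a nondecreasing product of Lyndon
words, every Lyndon factor `v` of `w` is a factor of one of the `cᵢ`. -/
theorem lyndon_factor_in_shirshov_factor {X : Type*} [LinearOrder X] (w v : List X)
    (cs : List (List X)) (hjoin : cs.flatten = w) (hc : ∀ c ∈ cs, IsALSW c)
    (hchain : cs.Chain' (fun c d => c = d ∨ gtLex d c))
    (hv : IsALSW v) (hinf : v <:+: w) :
    ∃ c ∈ cs, v <:+: c := by
  subst hjoin
  induction cs with
  | nil =>
    have : v = [] := by simpa using hinf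
    exact absurd this hv.1
  | cons c cs ih =>
    rw [List.flatten_cons] at hinf
    obtain ⟨s, tl, hst⟩ := hinf
    by_cases h1 : s.length + v.length ≤ c.length
    · -- v fits inside c
      refine ⟨c, List.mem_cons_self, s, tl.take (c.length - (s.length + v.length)), ?_⟩
      have h3 := congrArg (List.take c.length) hst
      rw [List.take_left, List.take_append,
        List.take_of_length_le
          (by simp only [List.length_append]; omega : (s ++ v).length ≤ c.length),
        List.length_append] at h3
      exact h3
    · by_cases h2 : c.length ≤ s.length
      · -- v lies inside cs.flatten
        have hst2 : c ++ cs.flatten = s ++ (v ++ tl) := by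
          rw [← hst, List.append_assoc]
        have hs2 : s = c ++ s.drop c.length := eq_pref hst2 h2
        have hF : s.drop c.length ++ v ++ tl = cs.flatten := by
          have h4 := hst
          rw [hs2, List.append_assoc, List.append_assoc] at h4
          have h5 := List.append_cancel_left h4
          rw [← List.append_assoc] at h5
          exact h5
        obtain ⟨c', hc', hvc'⟩ := ih (fun d hd => hc d (List.mem_cons_of_mem c hd))
          hchain.tail ⟨s.drop c.length, tl, hF⟩
        exact ⟨c', List.mem_cons_of_mem c hc', hvc'⟩
      · -- crossing case: impossible
        push_neg at h1 h2
        exfalso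
        have hcsvt : c = s ++ v.take (c.length - s.length) := by
          have h3 := congrArg (List.take c.length) hst
          rw [List.take_left, List.take_append,
            List.take_append,
            List.take_of_length_le (by omega : s.length ≤ c.length),
            (show c.length - (s ++ v).length = 0 by
              simp only [List.length_append]; omega),
            List.take_zero, List.append_nil] at h3
          exact h3.symm
        have htF : v.drop (c.length - s.length) ++ tl = cs.flatten := by
          have h3 := congrArg (List.drop c.length) hst
          rw [List.drop_left, List.drop_append,
            List.drop_append,
            List.drop_eq_nil_of_le h2.le, List.nil_append,
            (show c.length - (s ++ v).length = 0 by
              simp only [List.length_append]; omega),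
            List.drop_zero] at h3
          exact h3
        have hvtne : v.take (c.length - s.length) ≠ [] := by
          intro h0
          have h5 : (v.take (c.length - s.length)).length = 0 := by rw [h0]; rfl
          rw [List.length_take] at h5
          omega
        have htne : v.drop (c.length - s.length) ≠ [] := by
          intro h0
          have h5 : (v.drop (c.length - s.length)).length = 0 := by rw [h0]; rfl
          rw [List.length_drop] at h5
          omega
        have hvsplit : v = v.take (c.length - s.length) ++ v.drop (c.length - s.length) :=
          (List.take_append_drop _ v).symm
        have hGt : GtL v (v.drop (c.length - s.length)) :=
          alsw_gtL_suffix hv hvtne htne hvsplit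
        have hxv : gtLex (v.take (c.length - s.length)) v := by
          have h5 := gtLex_append (v.take (c.length - s.length))
            (v.drop (c.length - s.length)) htne
          rwa [List.take_append_drop] at h5
        have hcv : gtLex c v := by
          rcases eq_or_ne s [] with rfl | hsne
          · rw [List.nil_append] at hcsvt
            rw [hcsvt]
            exact hxv
          · have hG : GtL c (v.take (c.length - s.length)) :=
              alsw_gtL_suffix (hc c (List.mem_cons_self)) hsne hvtne hcsvt
            exact gtLex_trans _ _ _ (gtLex_of_gtL hG) hxv
        have hge : ∀ d ∈ cs, d = v ∨ gtLex d v := by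
          intro d hd
          rcases chain_head hchain d hd with rfl | h3
          · exact Or.inr hcv
          · exact Or.inr (gtLex_trans _ _ _ h3 hcv)
        exact no_cross hv cs (v.drop (c.length - s.length)) v (List.suffix_refl v) hGt
          ⟨tl, htF⟩ hge
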